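/- For each n-th root of unity z_m, the function h_n(z) := n z^{n-2}/(z^n − 1) − 1/(z_m(z − z_m)) extends continuously to z = z_m and satisfies |h_n(z_m)| ≤ c·n for a constant c independent of n. -/

import Mathlib

open Filter Finset

/-- For each n-th root of unity z_m, h_n(z) = n z^{n-2}/(z^n − 1) − 1/(z_m(z − z_m))
extends continuously to z_m with |h_n(z_m)| ≤ c·n, c independent of n. -/
theorem stmt_12 : ∃ c : ℝ, 0 < c ∧ ∀ n : ℕ, 2 ≤ n → ∀ m : ℕ,
    ∃ L : ℂ,
      Tendsto
        (fun z : ℂ => (n : ℂ) * z^(n-2) / (z^n - 1)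
          - 1 / (Complex.exp (2*Real.pi*Complex.I*m/n)
              * (z - Complex.exp (2*Real.pi*Complex.I*m/n))))
        (nhdsWithin (Complex.exp (2*Real.pi*Complex.I*m/n)) {z : ℂ | z^n ≠ 1})
        (nhds L)
      ∧ ‖L‖ ≤ c * n := by
  refine ⟨2, by norm_num, ?_⟩
  intro n hn m
  set ζ : ℂ := Complex.exp (2*Real.pi*Complex.I*m/n) with hζdef
  have hnne : (n:ℂ) ≠ 0 := Nat.cast_ne_zero.mpr (by omega)
  have hnR : (0:ℝ) < n := by exact_mod_cast Nat.lt_of_lt_of_le (by norm_num) hn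
  have hζn : ζ ^ n = 1 := by
    rw [hζdef, ← Complex.exp_nat_mul]
    have h : (n:ℂ) * (2*Real.pi*Complex.I*m/n) = (m:ℤ) * (2*Real.pi*Complex.I) := by
      push_cast
      field_simp
    rw [h, Complex.exp_int_mul_two_pi_mul_I]
  have hζ0 : ζ ≠ 0 := Complex.exp_ne_zero _
  set S : ℂ → ℂ := fun z => ∑ k ∈ range n, z^k * ζ^(n-1-k) with hS
  have hgeom : ∀ z : ℂ, (z - ζ) * S z = z^n - 1 := by
    intro z
    rw [mul_comm]
    simpa [hζn] using geom_sum₂_mul z ζ n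
  have hSζ : S ζ = (n:ℂ) * ζ^(n-1) := by
    rw [hS]
    simp only
    rw [Finset.sum_congr rfl (fun k hk => ?_), Finset.sum_const, Finset.card_range,
      nsmul_eq_mul]
    rw [← pow_add]
    congr 1
    have := Finset.mem_range.mp hk
    omega
  have hpow1 : ζ * ζ^(n-1) = ζ^n := by
    rw [← pow_succ']
    congr 1
    omega
  have hζS : ζ * S ζ = (n:ℂ) := by
    calc ζ * S ζ = (n:ℂ) * (ζ * ζ^(n-1)) := by rw [hSζ]; ring
    _ = (n:ℂ) := by rw [hpow1, hζn, mul_one]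
  set D : ℂ := (n:ℂ) * ((n-2:ℕ):ℂ) * ζ^(n-3) * ζ
      - ∑ k ∈ range n, (k:ℂ) * ζ^(k-1) * ζ^(n-1-k) with hD
  set F : ℂ → ℂ := fun z => (n:ℂ) * z^(n-2) * ζ - S z with hFdef
  have hF : HasDerivAt F D ζ := by
    have h1 : HasDerivAt (fun z : ℂ => (n:ℂ) * z^(n-2) * ζ)
        ((n:ℂ) * ((n-2:ℕ):ℂ) * ζ^(n-3) * ζ) ζ := by
      have h2 := ((hasDerivAt_pow (n-2) ζ).const_mul (n:ℂ)).mul_const ζ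
      refine h2.congr_deriv ?_
      rw [show n-2-1 = n-3 from by omega]
      ring
    have h2 : HasDerivAt S (∑ k ∈ range n, (k:ℂ) * ζ^(k-1) * ζ^(n-1-k)) ζ := by
      rw [hS]
      apply HasDerivAt.fun_sum
      intro k _
      simpa [mul_assoc] using (hasDerivAt_pow k ζ).mul_const (ζ^(n-1-k))
    exact h1.sub h2
  have hFζ : F ζ = 0 := by
    rw [hFdef]
    simp only
    rw [hSζ]
    have h3 : ζ^(n-2) * ζ = ζ^(n-1) := by
      rw [mul_comm, ← pow_succ']
      congr 1
      omega
    rw [mul_assoc, h3]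
    ring
  have hsub : {z : ℂ | z^n ≠ 1} ⊆ {ζ}ᶜ := by
    intro z hz hzζ
    simp only [Set.mem_singleton_iff] at hzζ
    exact hz (by rw [hzζ]; exact hζn)
  have hslope : Tendsto (slope F ζ)
      (nhdsWithin ζ {z : ℂ | z^n ≠ 1}) (nhds D) :=
    (hasDerivAt_iff_tendsto_slope.mp hF).mono_left (nhdsWithin_mono ζ hsub)
  have hScont : Continuous S := by
    rw [hS]
    exact continuous_finset_sum _ fun k _ => (continuous_pow k).mul continuous_const
  have hden : Tendsto (fun z => ζ * S z) (nhdsWithin ζ {z : ℂ | z^n ≠ 1})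
      (nhds ((n:ℂ))) := by
    have h : Tendsto (fun z => ζ * S z) (nhds ζ) (nhds (ζ * S ζ)) :=
      (continuous_const.mul hScont).tendsto ζ
    rw [hζS] at h
    exact h.mono_left nhdsWithin_le_nhds
  refine ⟨D / n, ?_, ?_⟩
  · have htend : Tendsto (fun z => slope F ζ z / (ζ * S z))
        (nhdsWithin ζ {z : ℂ | z^n ≠ 1}) (nhds (D / n)) := hslope.div hden hnne
    refine htend.congr' ?_
    filter_upwards [self_mem_nhdsWithin] with z hz
    have hz' : z^n ≠ 1 := hz
    have hzζ : z - ζ ≠ 0 := by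
      intro h
      rw [sub_eq_zero] at h
      exact hz' (by rw [h]; exact hζn)
    have hSz : S z ≠ 0 := by
      intro h
      apply hz'
      have hg := hgeom z
      rw [h, mul_zero] at hg
      exact (sub_eq_zero.mp hg.symm)
    rw [slope_def_field, hFζ, sub_zero]
    rw [show z^n - 1 = (z - ζ) * S z from (hgeom z).symm]
    rw [hFdef]
    simp only
    field_simp
  · have hζnorm : ‖ζ‖ = 1 := by
      have h : (2*(Real.pi:ℂ)*Complex.I*m/n) = ((2*Real.pi*m/n : ℝ):ℂ) * Complex.I := by
        push_cast
        ring
      rw [hζdef]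
      show ‖_‖ = 1
      rw [h, Complex.norm_exp]
      simp
    have hA : ‖(n:ℂ) * ((n-2:ℕ):ℂ) * ζ^(n-3) * ζ‖ ≤ (n:ℝ) * n := by
      rw [norm_mul, norm_mul, norm_mul, norm_pow, hζnorm, Complex.norm_natCast,
        Complex.norm_natCast]
      simp only [one_pow, mul_one]
      have : ((n-2:ℕ):ℝ) ≤ (n:ℝ) := by exact_mod_cast Nat.sub_le n 2
      nlinarith
    have hB : ‖∑ k ∈ range n, (k:ℂ) * ζ^(k-1) * ζ^(n-1-k)‖ ≤ (n:ℝ) * n := by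
      calc ‖∑ k ∈ range n, (k:ℂ) * ζ^(k-1) * ζ^(n-1-k)‖
          ≤ ∑ k ∈ range n, ‖(k:ℂ) * ζ^(k-1) * ζ^(n-1-k)‖ := norm_sum_le _ _
        _ ≤ ∑ _k ∈ range n, (n:ℝ) := by
            apply Finset.sum_le_sum
            intro k hk
            rw [norm_mul, norm_mul, norm_pow, norm_pow, hζnorm, Complex.norm_natCast]
            simp only [one_pow, mul_one]
            exact_mod_cast (Finset.mem_range.mp hk).le
        _ = (n:ℝ) * n := by
            rw [Finset.sum_const, Finset.card_range, nsmul_eq_mul]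
    have hDn : ‖D‖ ≤ 2 * n * n := by
      calc ‖D‖ ≤ ‖(n:ℂ) * ((n-2:ℕ):ℂ) * ζ^(n-3) * ζ‖
            + ‖∑ k ∈ range n, (k:ℂ) * ζ^(k-1) * ζ^(n-1-k)‖ := norm_sub_le _ _
        _ ≤ (n:ℝ) * n + (n:ℝ) * n := add_le_add hA hB
        _ = 2 * n * n := by ring
    rw [norm_div, Complex.norm_natCast, div_le_iff₀ hnR]
    calc ‖D‖ ≤ 2 * n * n := hDn
      _ = 2 * (n:ℝ) * n := rfl
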